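/- arXiv:1506.02308 — 4 statements merged into one kernel-verified Lean document; each statement's English description precedes it below -/
import Mathlib

section
/- Let G be a subgroup of ℤ^m and let G⁺ = G ∩ (ℤ^m)⁺ be the set of elements of G with all coordinates nonnegative. Then G⁺ is finitely generated as a (commutative, additive) semigroup (i.e., there is a finite subset of G⁺ such that every element of G⁺ is a finite sum of elements from that subset). -/
open Set

private def σfun {m : ℕ} (x : Fin m → ℤ) : ℕ := ∑ i, (x i).toNat

private lemma sigma_lt {m : ℕ} {x y : Fin m → ℤ} (hy : 0 ≤ y) (hle : y ≤ x) (hne : y ≠ x) :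
    σfun y < σfun x := by
  obtain ⟨j, hj⟩ : ∃ j, y j ≠ x j := by
    by_contra h; push_neg at h; exact hne (funext h)
  refine Finset.sum_lt_sum (fun i _ => Int.toNat_le_toNat (hle i)) ⟨j, Finset.mem_univ j, ?_⟩
  have h1 : y j < x j := lt_of_le_of_ne (hle j) hj
  have h0 : 0 ≤ y j := hy j
  omega

/-- The positive cone `G⁺ = G ∩ (ℤ^m)⁺` of a subgroup `G ≤ ℤ^m` is finitely generated
as an additive semigroup. -/
theorem stmt_0 (m : ℕ) (G : AddSubgroup (Fin m → ℤ)) :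
    ∃ F : Finset (Fin m → ℤ),
      (↑F : Set (Fin m → ℤ)) ⊆ {x | x ∈ G ∧ 0 ≤ x} ∧
      ∀ x ∈ {x : Fin m → ℤ | x ∈ G ∧ 0 ≤ x},
        x ∈ AddSubmonoid.closure (↑F : Set (Fin m → ℤ)) := by
  set S : Set (Fin m → ℤ) := {x | x ∈ G ∧ 0 ≤ x} with hS
  set T : Set (Fin m → ℤ) := {x ∈ S | x ≠ 0} with hT
  set Mn : Set (Fin m → ℤ) := {t ∈ T | ∀ s ∈ T, s ≤ t → s = t} with hMn
  -- S is PWO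
  have hSpwo : S.IsPWO := by
    have himg : S ⊆ (fun f : Fin m → ℕ => (fun i => (f i : ℤ))) '' Set.univ := by
      rintro x ⟨-, hx⟩
      exact ⟨fun i => (x i).toNat, trivial, funext fun i => Int.toNat_of_nonneg (hx i)⟩
    refine ((show (Set.univ : Set (Fin m → ℕ)).IsPWO by simpa using Set.IsPWO.pi (fun (_ : Fin m) => (Set.isWF_univ_iff.2 inferInstance : (Set.univ : Set ℕ).IsWF).isPWO)).image_of_monotone ?_).mono himg
    intro a b hab i
    simp only []
    exact_mod_cast hab i
  -- Mn is a finite antichain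
  have hanti : IsAntichain (· ≤ ·) Mn := by
    rintro a ⟨haT, hamin⟩ b ⟨hbT, hbmin⟩ hne hle
    exact hne (hbmin a haT hle)
  have hMnfin : Mn.Finite :=
    hanti.finite_of_partiallyWellOrderedOn
      ((hSpwo.mono (fun t ht => ht.1.1)) : Mn.PartiallyWellOrderedOn (· ≤ ·))
  -- every element of T has a minimal element of T below it
  have hmin : ∀ n : ℕ, ∀ x ∈ T, σfun x ≤ n → ∃ t ∈ Mn, t ≤ x := by
    intro n
    induction n with
    | zero =>
      intro x hx hσ
      exfalso
      have : σfun x = 0 := Nat.le_zero.1 hσ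
      apply hx.2
      funext i
      have h0 : 0 ≤ x i := hx.1.2 i
      have h2 : (x i).toNat = 0 :=
        Finset.sum_eq_zero_iff.1 this i (Finset.mem_univ i)
      show x i = (0 : Fin m → ℤ) i
      simp only [Pi.zero_apply]
      omega
    | succ n ih =>
      intro x hx hσ
      by_cases hxm : ∀ s ∈ T, s ≤ x → s = x
      · exact ⟨x, ⟨hx, hxm⟩, le_refl x⟩
      · push_neg at hxm
        obtain ⟨y, hyT, hyx, hyne⟩ := hxm
        have hlt : σfun y < σfun x := sigma_lt hyT.1.2 hyx hyne
        obtain ⟨t, htMn, hty⟩ := ih y hyT (by omega)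
        exact ⟨t, htMn, hty.trans hyx⟩
  refine ⟨hMnfin.toFinset, ?_, ?_⟩
  · intro t ht
    simp only [Finset.mem_coe, Set.Finite.mem_toFinset] at ht
    exact ht.1.1
  · -- every element of S is in the closure, by strong induction on σfun
    have key : ∀ n : ℕ, ∀ x ∈ S, σfun x ≤ n →
        x ∈ AddSubmonoid.closure (↑hMnfin.toFinset : Set (Fin m → ℤ)) := by
      intro n
      induction n with
      | zero =>
        intro x hx hσ
        have : x = 0 := by
          funext i
          have h0 : 0 ≤ x i := hx.2 i
          have : (x i).toNat = 0 :=
            Finset.sum_eq_zero_iff.1 (Nat.le_zero.1 hσ) i (Finset.mem_univ i)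
          show x i = (0 : Fin m → ℤ) i
          simp only [Pi.zero_apply]
          omega
        rw [this]; exact zero_mem _
      | succ n ih =>
        intro x hx hσ
        by_cases hx0 : x = 0
        · rw [hx0]; exact zero_mem _
        · obtain ⟨t, htMn, htx⟩ := hmin (σfun x) x ⟨hx, hx0⟩ (le_refl _)
          have htS : t ∈ S := htMn.1.1
          have hxt : x - t ∈ S := by
            refine ⟨sub_mem hx.1 htS.1, fun i => ?_⟩
            simpa using htx i
          have hne : x - t ≠ x := by
            intro h
            apply htMn.1.2
            have := sub_eq_self.1 h
            exact this
          have hlt : σfun (x - t) < σfun x := sigma_lt hxt.2 (by intro i; simpa using htS.2 i) hne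
          have hmem : t ∈ AddSubmonoid.closure (↑hMnfin.toFinset : Set (Fin m → ℤ)) :=
            AddSubmonoid.subset_closure (by
              simp only [Finset.mem_coe, Set.Finite.mem_toFinset]; exact htMn)
          have : x = t + (x - t) := by ring
          rw [this]
          exact add_mem hmem (ih (x - t) hxt (by omega))
    intro x hx
    exact key (σfun x) x hx (le_refl _)
end

section
/- Let P be an m × n matrix with integer entries, and let ξ ∈ ℝ^m have all entries nonnegative. Assume every entry of P ξ is rational. Then for any ε > 0 there exists ζ ∈ ℚ^m with all entries nonnegative such that P ζ = P ξ and ‖ξ − ζ‖_∞ < ε. -/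
open Matrix Finset

lemma cast_mulVecQ {K : Type*} [Fintype K] {m : ℕ} (A : Matrix K (Fin m) ℚ)
    (q : Fin m → ℚ) (j : K) :
    (A.map (Rat.cast : ℚ → ℝ)).mulVec (fun i => (q i : ℝ)) j = ((A.mulVec q j : ℚ) : ℝ) := by
  simp only [Matrix.mulVec, dotProduct, Matrix.map_apply]
  push_cast
  rfl

lemma mem_range_of_real {K : Type*} [Fintype K] [DecidableEq K] {m : ℕ}
    (A : Matrix K (Fin m) ℚ) (x : Fin m → ℝ) (c : K → ℚ)
    (h : (A.map (Rat.cast : ℚ → ℝ)).mulVec x = fun j => (c j : ℝ)) :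
    c ∈ LinearMap.range A.mulVecLin := by
  by_contra hc
  obtain ⟨f, hf1, hf0⟩ :=
    Submodule.exists_dual_map_eq_bot_of_notMem (p := LinearMap.range A.mulVecLin) hc
      inferInstance
  set r : K → ℚ := fun j => f (Pi.single j 1) with hr
  have hsingle : ∀ j : K, (fun j1 => if j = j1 then (1:ℚ) else 0) = Pi.single j 1 := by
    intro j; funext j1; simp [Pi.single_apply, eq_comm]
  have hfv : ∀ v : K → ℚ, f v = ∑ j, v j * r j := by
    intro v
    conv_lhs => rw [pi_eq_sum_univ v]
    rw [map_sum]
    refine Finset.sum_congr rfl fun j _ => ?_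
    rw [hsingle j, _root_.map_smul, smul_eq_mul]
  have hrow : ∀ i : Fin m, ∑ j, A j i * r j = 0 := by
    intro i
    have hmem : (fun j => A j i) ∈ LinearMap.range A.mulVecLin := by
      refine ⟨Pi.single i 1, ?_⟩
      ext j
      simp [Matrix.mulVecLin_apply, Matrix.mulVec_single]
    have : f (fun j => A j i) = 0 := by
      have := hf0.le (Submodule.mem_map_of_mem hmem)
      simpa using this
    rw [hfv] at this
    exact this
  have hzero : (∑ j, (c j : ℝ) * (r j : ℝ)) = 0 := by
    have hx : ∀ j : K, (c j : ℝ) = ∑ i, (A j i : ℝ) * x i := by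
      intro j
      have := congrFun h j
      simp only [Matrix.mulVec, dotProduct, Matrix.map_apply] at this
      exact this.symm
    calc (∑ j, (c j : ℝ) * (r j : ℝ))
        = ∑ j, (∑ i, (A j i : ℝ) * x i) * (r j : ℝ) := by
          refine Finset.sum_congr rfl fun j _ => by rw [hx j]
      _ = ∑ j, ∑ i, ((A j i : ℝ) * x i) * (r j : ℝ) := by
          refine Finset.sum_congr rfl fun j _ => by rw [Finset.sum_mul]
      _ = ∑ i, ∑ j, ((A j i : ℝ) * x i) * (r j : ℝ) := Finset.sum_comm
      _ = ∑ i, x i * (∑ j, (A j i : ℝ) * (r j : ℝ)) := by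
          refine Finset.sum_congr rfl fun i _ => ?_
          rw [Finset.mul_sum]
          refine Finset.sum_congr rfl fun j _ => by ring
      _ = 0 := by
          refine Finset.sum_eq_zero fun i _ => ?_
          have : ((∑ j, A j i * r j : ℚ) : ℝ) = 0 := by rw [hrow i]; norm_num
          push_cast at this
          rw [this, mul_zero]
  have hone : (∑ j, (c j : ℝ) * (r j : ℝ)) ≠ 0 := by
    have : ((f c : ℚ) : ℝ) ≠ 0 := by exact_mod_cast hf1
    rw [hfv] at this
    push_cast at this
    exact this
  exact hone hzero

/-- Core lemma: rational approximate solutions of rational linear systems. -/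
lemma rat_approx_solution {K : Type*} [Fintype K] [DecidableEq K] {m : ℕ}
    (A : Matrix K (Fin m) ℚ) (x : Fin m → ℝ) (c : K → ℚ)
    (h : (A.map (Rat.cast : ℚ → ℝ)).mulVec x = fun j => (c j : ℝ))
    (ε : ℝ) (hε : 0 < ε) :
    ∃ q : Fin m → ℚ, A.mulVec q = c ∧ ∀ i, |x i - (q i : ℝ)| < ε := by
  classical
  -- right inverse G of mulVecLin on its range
  obtain ⟨W', hW'⟩ := (LinearMap.range A.mulVecLin).exists_isCompl
  set proj := (LinearMap.range A.mulVecLin).linearProjOfIsCompl W' hW'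
  obtain ⟨s, hs⟩ := A.mulVecLin.rangeRestrict.exists_rightInverse_of_surjective
    (LinearMap.range_eq_top.2 A.mulVecLin.surjective_rangeRestrict)
  set G : (K → ℚ) →ₗ[ℚ] (Fin m → ℚ) := s.comp proj with hG
  have hGinv : ∀ z ∈ LinearMap.range A.mulVecLin, A.mulVec (G z) = z := by
    intro z hz
    have h1 : proj z = ⟨z, hz⟩ := Submodule.linearProjOfIsCompl_apply_left hW' ⟨z, hz⟩
    have h2 : A.mulVecLin.rangeRestrict (s ⟨z, hz⟩) = ⟨z, hz⟩ := by
      have := congrFun (congrArg DFunLike.coe hs) ⟨z, hz⟩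
      simpa only [LinearMap.comp_apply, LinearMap.id_apply] using this
    have h3 : A.mulVecLin (s ⟨z, hz⟩) = z := congrArg Subtype.val h2
    simp only [hG, LinearMap.comp_apply, h1]
    simpa [Matrix.mulVecLin_apply] using h3
  -- constants
  set SA : ℝ := ∑ j : K, ∑ i : Fin m, |(A j i : ℝ)| with hSA
  set SG : ℝ := ∑ j : K, ∑ i : Fin m, |((G (Pi.single j 1)) i : ℝ)| with hSG
  have hSA0 : 0 ≤ SA := Finset.sum_nonneg fun j _ => Finset.sum_nonneg fun i _ => abs_nonneg _
  have hSG0 : 0 ≤ SG := Finset.sum_nonneg fun j _ => Finset.sum_nonneg fun i _ => abs_nonneg _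
  set B : ℝ := 1 + SG * SA with hB
  have hB0 : 0 < B := by positivity
  set δ : ℝ := ε / B with hδ
  have hδ0 : 0 < δ := div_pos hε hB0
  -- rational approximation y
  have hy : ∀ i : Fin m, ∃ q : ℚ, |x i - (q : ℝ)| < δ := fun i => exists_rat_near (x i) hδ0
  choose y hy using hy
  set c' : K → ℚ := c - A.mulVec y with hc'
  have hcast : (A.map (Rat.cast : ℚ → ℝ)).mulVec (x - fun i => (y i : ℝ))
      = fun j => ((c' j : ℚ) : ℝ) := by
    funext j
    rw [Matrix.mulVec_sub]
    have h1 := cast_mulVecQ A y j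
    have h2 := congrFun h j
    simp only [Pi.sub_apply, h2, h1, hc']
    push_cast
    ring
  have hc'mem : c' ∈ LinearMap.range A.mulVecLin :=
    mem_range_of_real A _ c' hcast
  set d : Fin m → ℚ := G c' with hd
  have hAd : A.mulVec d = c' := hGinv c' hc'mem
  refine ⟨y + d, ?_, ?_⟩
  · rw [Matrix.mulVec_add, hAd, hc']; ring
  · -- bounds
    have hc'bound : ∀ j : K, |(c' j : ℝ)| ≤ SA * δ := by
      intro j
      have := congrFun hcast j
      simp only [Matrix.mulVec, dotProduct, Matrix.map_apply, Pi.sub_apply] at this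
      rw [← this]
      calc |∑ i, (A j i : ℝ) * (x i - y i)| ≤ ∑ i, |(A j i : ℝ) * (x i - y i)| :=
            Finset.abs_sum_le_sum_abs _ _
        _ ≤ ∑ i, |(A j i : ℝ)| * δ := by
            refine Finset.sum_le_sum fun i _ => ?_
            rw [abs_mul]
            exact mul_le_mul_of_nonneg_left (le_of_lt (hy i)) (abs_nonneg _)
        _ = (∑ i, |(A j i : ℝ)|) * δ := by rw [Finset.sum_mul]
        _ ≤ SA * δ := by
            refine mul_le_mul_of_nonneg_right ?_ (le_of_lt hδ0)
            rw [hSA]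
            exact Finset.single_le_sum (f := fun j => ∑ i, |(A j i : ℝ)|)
              (fun j _ => Finset.sum_nonneg fun i _ => abs_nonneg _) (Finset.mem_univ j)
    have hdrep : ∀ i : Fin m, (d i : ℝ) = ∑ j, (c' j : ℝ) * ((G (Pi.single j 1)) i : ℝ) := by
      intro i
      have hsingle : ∀ j : K, (fun j1 => if j = j1 then (1:ℚ) else 0) = Pi.single j 1 := by
        intro j; funext j1; simp [Pi.single_apply, eq_comm]
      have : d = ∑ j, c' j • G (Pi.single j 1) := by
        rw [hd]
        conv_lhs => rw [pi_eq_sum_univ c']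
        rw [map_sum]
        refine Finset.sum_congr rfl fun j _ => by rw [hsingle j, _root_.map_smul]
      rw [this]
      push_cast [Finset.sum_apply, Pi.smul_apply, smul_eq_mul]
      rfl
    have hdbound : ∀ i : Fin m, |(d i : ℝ)| ≤ SG * (SA * δ) := by
      intro i
      rw [hdrep i]
      calc |∑ j, (c' j : ℝ) * ((G (Pi.single j 1)) i : ℝ)|
          ≤ ∑ j, |(c' j : ℝ)| * |((G (Pi.single j 1)) i : ℝ)| := by
            refine (Finset.abs_sum_le_sum_abs _ _).trans ?_
            refine le_of_eq (Finset.sum_congr rfl fun j _ => abs_mul _ _)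
        _ ≤ ∑ j, (SA * δ) * |((G (Pi.single j 1)) i : ℝ)| := by
            refine Finset.sum_le_sum fun j _ => ?_
            exact mul_le_mul_of_nonneg_right (hc'bound j) (abs_nonneg _)
        _ = (∑ j, |((G (Pi.single j 1)) i : ℝ)|) * (SA * δ) := by
            rw [← Finset.mul_sum, mul_comm]
        _ ≤ SG * (SA * δ) := by
            refine mul_le_mul_of_nonneg_right ?_ (by positivity)
            rw [hSG]
            refine Finset.sum_le_sum fun j _ => ?_
            exact Finset.single_le_sum (f := fun i => |((G (Pi.single j 1)) i : ℝ)|)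
              (fun i _ => abs_nonneg _) (Finset.mem_univ i)
    intro i
    have htri : |x i - (((y + d) i : ℚ) : ℝ)| ≤ |x i - (y i : ℝ)| + |((d i : ℚ) : ℝ)| := by
      have he : (((y + d) i : ℚ) : ℝ) = (y i : ℝ) + ((d i : ℚ) : ℝ) := by rw [Pi.add_apply, Rat.cast_add]
      rw [he]
      have h1 : x i - ((y i : ℝ) + ((d i : ℚ) : ℝ)) = (x i - (y i : ℝ)) + (-((d i : ℚ) : ℝ)) := by
        ring
      rw [h1]
      exact (abs_add_le _ _).trans (by rw [abs_neg])
    calc |x i - (((y + d) i : ℚ) : ℝ)| ≤ |x i - (y i : ℝ)| + |((d i : ℚ) : ℝ)| := htri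
      _ < δ + SG * (SA * δ) := add_lt_add_of_lt_of_le (hy i) (hdbound i)
      _ = B * δ := by rw [hB]; ring
      _ = ε := by rw [hδ]; field_simp

/-- If `P` is an integer matrix, `ξ ∈ ℝ^m` has nonnegative entries, and every entry of `P ξ`
is rational, then `ξ` can be perturbed to a nonnegative rational vector `ζ` with `P ζ = P ξ`
and `‖ξ − ζ‖_∞ < ε`. -/
theorem stmt_3 (m n : ℕ) (P : Matrix (Fin n) (Fin m) ℤ) (ξ : Fin m → ℝ)
    (hξ : ∀ i, 0 ≤ ξ i)
    (hrat : ∀ j, ∃ q : ℚ, (P.map (Int.cast : ℤ → ℝ)).mulVec ξ j = (q : ℝ))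
    (ε : ℝ) (hε : 0 < ε) :
    ∃ ζ : Fin m → ℚ, (∀ i, 0 ≤ ζ i) ∧
      (P.map (Int.cast : ℤ → ℝ)).mulVec (fun i => (ζ i : ℝ)) =
        (P.map (Int.cast : ℤ → ℝ)).mulVec ξ ∧
      ∀ i, |ξ i - (ζ i : ℝ)| < ε := by
  classical
  choose cq hcq using hrat
  -- augmented matrix
  set A : Matrix (Fin n ⊕ Fin m) (Fin m) ℚ := fun j i =>
    match j with
    | Sum.inl j => (P j i : ℚ)
    | Sum.inr i' => if ξ i' = 0 ∧ i = i' then 1 else 0 with hA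
  set c : Fin n ⊕ Fin m → ℚ := fun j =>
    match j with
    | Sum.inl j => cq j
    | Sum.inr _ => 0 with hc
  have hAP : ∀ (j : Fin n) (i : Fin m), ((A (Sum.inl j) i : ℚ) : ℝ) = (P j i : ℝ) := by
    intro j i; simp [hA]
  have hsol : (A.map (Rat.cast : ℚ → ℝ)).mulVec ξ = fun j => (c j : ℝ) := by
    funext j
    cases j with
    | inl j =>
        have := hcq j
        simp only [Matrix.mulVec, dotProduct, Matrix.map_apply] at this ⊢
        rw [← this]
        refine Finset.sum_congr rfl fun i _ => ?_
        rw [hAP j i]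
    | inr i' =>
        simp only [Matrix.mulVec, dotProduct, Matrix.map_apply, hA, hc]
        by_cases h0 : ξ i' = 0
        · simp only [h0, true_and, Matrix.map, Matrix.of_apply]
          rw [Finset.sum_eq_single i'] <;> simp_all
        · simp [h0, Matrix.map]
  -- choose δ
  set T : Finset ℝ := insert ε ((Finset.univ.filter fun i => 0 < ξ i).image ξ) with hT
  have hTne : T.Nonempty := ⟨ε, Finset.mem_insert_self _ _⟩
  set δ : ℝ := T.min' hTne with hδ
  have hδpos : 0 < δ := by
    rw [hδ]
    rw [Finset.lt_min'_iff]
    intro t ht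
    rw [hT] at ht
    rcases Finset.mem_insert.1 ht with h | h
    · rwa [h]
    · obtain ⟨i, hi, rfl⟩ := Finset.mem_image.1 h
      exact (Finset.mem_filter.1 hi).2
  have hδε : δ ≤ ε := Finset.min'_le _ _ (Finset.mem_insert_self _ _)
  have hδξ : ∀ i, 0 < ξ i → δ ≤ ξ i := by
    intro i hi
    exact Finset.min'_le _ _ (Finset.mem_insert_of_mem
      (Finset.mem_image_of_mem ξ (Finset.mem_filter.2 ⟨Finset.mem_univ i, hi⟩)))
  obtain ⟨ζ, hζeq, hζnear⟩ := rat_approx_solution A ξ c hsol δ hδpos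
  refine ⟨ζ, ?_, ?_, fun i => lt_of_lt_of_le (hζnear i) hδε⟩
  · intro i
    by_cases h0 : ξ i = 0
    · -- equation (inr i) forces ζ i = 0
      have := congrFun hζeq (Sum.inr i)
      simp only [Matrix.mulVec, dotProduct, hA, hc, h0, true_and] at this
      rw [Finset.sum_eq_single i] at this <;> simp_all
    · have hpos : 0 < ξ i := lt_of_le_of_ne (hξ i) (Ne.symm h0)
      have h1 : |ξ i - (ζ i : ℝ)| < ξ i := lt_of_lt_of_le (hζnear i) (hδξ i hpos)
      have := abs_lt.1 h1
      have : (0 : ℝ) < ζ i := by linarith [this.2]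
      exact_mod_cast le_of_lt this
  · funext j
    have := congrFun hζeq (Sum.inl j)
    have hcast := cast_mulVecQ A ζ (Sum.inl j)
    have h2 : (P.map (Int.cast : ℤ → ℝ)).mulVec (fun i => (ζ i : ℝ)) j
        = (A.map (Rat.cast : ℚ → ℝ)).mulVec (fun i => (ζ i : ℝ)) (Sum.inl j) := by
      simp only [Matrix.mulVec, dotProduct, Matrix.map_apply]
      refine Finset.sum_congr rfl fun i _ => ?_
      rw [hAP j i]
    rw [h2, hcast, this, hcq j]
end

section
/- Let P be a rational matrix defining a surjective linear map ℝ^m → ℝ^n (m ≥ n, rank P = n), and let σ > 0. Then for every ε with 0 < ε < σ there exists δ > 0 such that: for all ξ ∈ ℝ^m and κ ∈ ℝ^n, if every entry of ξ is greater than σ and ‖κ − P ξ‖_∞ < δ, then there exists ζ ∈ ℝ^m with all entries nonnegative such that P ζ = κ and ‖ξ − ζ‖_∞ < ε. -/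
/-- Perturbation lemma: for a surjective rational matrix `P : ℝ^m → ℝ^n` and `0 < ε < σ`,
there is `δ > 0` such that any `ξ` with entries `> σ` and any `κ` with `‖κ - Pξ‖_∞ < δ`
admit a nonnegative `ζ` with `Pζ = κ` and `‖ξ - ζ‖_∞ < ε`. -/
theorem stmt_5 (m n : ℕ) (P : Matrix (Fin n) (Fin m) ℚ)
    (hsurj : Function.Surjective fun x : Fin m → ℝ => (P.map (Rat.cast : ℚ → ℝ)).mulVec x)
    (σ : ℝ) (hσ : 0 < σ) (ε : ℝ) (hε0 : 0 < ε) (hεσ : ε < σ) :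
    ∃ δ > 0, ∀ (ξ : Fin m → ℝ) (κ : Fin n → ℝ),
      (∀ i, σ < ξ i) → ‖κ - (P.map (Rat.cast : ℚ → ℝ)).mulVec ξ‖ < δ →
      ∃ ζ : Fin m → ℝ, (∀ i, 0 ≤ ζ i) ∧
        (P.map (Rat.cast : ℚ → ℝ)).mulVec ζ = κ ∧ ‖ξ - ζ‖ < ε := by
  set L : (Fin m → ℝ) →ₗ[ℝ] (Fin n → ℝ) := (P.map (Rat.cast : ℚ → ℝ)).mulVecLin
  have hLsurj : Function.Surjective L := hsurj
  obtain ⟨f, hf⟩ := L.exists_rightInverse_of_surjective (LinearMap.range_eq_top.2 hLsurj)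
  let F : (Fin n → ℝ) →L[ℝ] (Fin m → ℝ) := f.toContinuousLinearMap
  refine ⟨ε / (‖F‖ + 1), by positivity, fun ξ κ hξ hκ => ?_⟩
  refine ⟨ξ + f (κ - L ξ), ?_, ?_, ?_⟩
  · have hb : ‖f (κ - L ξ)‖ < ε := by
      calc ‖F (κ - L ξ)‖ ≤ ‖F‖ * ‖κ - L ξ‖ := F.le_opNorm _
        _ ≤ (‖F‖ + 1) * ‖κ - L ξ‖ := by
            have := norm_nonneg (κ - L ξ); nlinarith [norm_nonneg F]
        _ < (‖F‖ + 1) * (ε / (‖F‖ + 1)) := by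
            apply mul_lt_mul_of_pos_left hκ; positivity
        _ = ε := by field_simp
    intro i
    have h1 : |f (κ - L ξ) i| ≤ ‖f (κ - L ξ)‖ := by
      simpa [Real.norm_eq_abs] using norm_le_pi_norm (f (κ - L ξ)) i
    have := hξ i
    have : |f (κ - L ξ) i| < σ := lt_of_le_of_lt h1 (hb.trans hεσ)
    have := abs_lt.1 this
    simp only [Pi.add_apply]
    linarith [hξ i]
  · have hfk : L (f (κ - L ξ)) = κ - L ξ := by
      have := LinearMap.congr_fun hf (κ - L ξ)
      simpa using this
    show L (ξ + f (κ - L ξ)) = κ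
    rw [map_add, hfk]; abel
  · have hb : ‖f (κ - L ξ)‖ < ε := by
      calc ‖F (κ - L ξ)‖ ≤ ‖F‖ * ‖κ - L ξ‖ := F.le_opNorm _
        _ ≤ (‖F‖ + 1) * ‖κ - L ξ‖ := by
            have := norm_nonneg (κ - L ξ); nlinarith [norm_nonneg F]
        _ < (‖F‖ + 1) * (ε / (‖F‖ + 1)) := by
            apply mul_lt_mul_of_pos_left hκ; positivity
        _ = ε := by field_simp
    have : ξ - (ξ + f (κ - L ξ)) = -(f (κ - L ξ)) := by abel
    rw [this, norm_neg]
    exact hb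
end

section
/- (Two-sided marriage lemma.) Let A, B be finite subsets of a metric space with distinguished subsets A₁ ⊆ A and B₁ ⊆ B, and let ε > 0. Suppose that for every X ⊆ A₁ the number of y ∈ B with dist(y, X) < ε is at least #X, and for every Y ⊆ B₁ the number of x ∈ A with dist(x, Y) < ε is at least #Y. Then there exist subsets A₂ with A₁ ⊆ A₂ ⊆ A and B₂ with B₁ ⊆ B₂ ⊆ B, and a bijection f : A₂ → B₂ such that dist(a, f(a)) < ε for all a ∈ A₂. -/
/-- Auxiliary inductive set of "chain" elements on the `B` side, used for the
Schröder–Bernstein style rematching argument. -/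
inductive MarriageChain {α : Type*} (g h : α → α) (A₁ B₁ : Finset α) : α → Prop
  | base (b : α) : b ∈ B₁ → (∀ a ∈ A₁, g a ≠ b) → MarriageChain g h A₁ B₁ b
  | step (b : α) : MarriageChain g h A₁ B₁ b → h b ∈ A₁ → g (h b) ∈ B₁ →
      MarriageChain g h A₁ B₁ (g (h b))

open scoped Classical in
/-- Two-sided marriage lemma (Gong): with marriage conditions for `A₁ ⊆ A` against `B`
and for `B₁ ⊆ B` against `A`, there are intermediate sets `A₁ ⊆ A₂ ⊆ A`, `B₁ ⊆ B₂ ⊆ B`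
which can be matched bijectively within `ε`. -/
theorem stmt_7 {α : Type*} [MetricSpace α] (A B A₁ B₁ : Finset α)
    (hA₁ : A₁ ⊆ A) (hB₁ : B₁ ⊆ B) (ε : ℝ) (hε : 0 < ε)
    (hA : ∀ X ⊆ A₁, X.card ≤ (B.filter fun y => ∃ x ∈ X, dist y x < ε).card)
    (hB : ∀ Y ⊆ B₁, Y.card ≤ (A.filter fun x => ∃ y ∈ Y, dist x y < ε).card) :
    ∃ A₂ : Finset α, ∃ B₂ : Finset α, A₁ ⊆ A₂ ∧ A₂ ⊆ A ∧ B₁ ⊆ B₂ ∧ B₂ ⊆ B ∧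
      ∃ f : α → α, Set.BijOn f ↑A₂ ↑B₂ ∧ ∀ a ∈ A₂, dist a (f a) < ε := by
  classical
  -- Hall's theorem on the `A₁` side
  have hallA : ∀ s : Finset ↥A₁,
      s.card ≤ (s.biUnion fun a => B.filter fun y => dist y (a : α) < ε).card := by
    intro s
    have hXsub : s.image (fun a : ↥A₁ => (a : α)) ⊆ A₁ := by
      intro x hx
      simp only [Finset.mem_image] at hx
      obtain ⟨a, -, rfl⟩ := hx
      exact a.2
    have hcard : (s.image (fun a : ↥A₁ => (a : α))).card = s.card :=
      Finset.card_image_of_injective _ Subtype.val_injective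
    have heq : (B.filter fun y => ∃ x ∈ s.image (fun a : ↥A₁ => (a : α)), dist y x < ε)
        = s.biUnion fun a => B.filter fun y => dist y (a : α) < ε := by
      ext y
      simp only [Finset.mem_filter, Finset.mem_biUnion, Finset.mem_image]
      constructor
      · rintro ⟨hyB, x, ⟨a, ha, rfl⟩, hd⟩
        exact ⟨a, ha, hyB, hd⟩
      · rintro ⟨a, ha, hyB, hd⟩
        exact ⟨hyB, a, ⟨a, ha, rfl⟩, hd⟩
    have := hA _ hXsub
    rw [heq] at this
    omega
  obtain ⟨f₁, hf₁inj, hf₁mem⟩ :=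
    (Finset.all_card_le_biUnion_card_iff_exists_injective
      (fun a : ↥A₁ => B.filter fun y => dist y (a : α) < ε)).mp hallA
  -- Hall's theorem on the `B₁` side
  have hallB : ∀ s : Finset ↥B₁,
      s.card ≤ (s.biUnion fun b => A.filter fun x => dist x (b : α) < ε).card := by
    intro s
    have hYsub : s.image (fun b : ↥B₁ => (b : α)) ⊆ B₁ := by
      intro x hx
      simp only [Finset.mem_image] at hx
      obtain ⟨b, -, rfl⟩ := hx
      exact b.2
    have hcard : (s.image (fun b : ↥B₁ => (b : α))).card = s.card :=
      Finset.card_image_of_injective _ Subtype.val_injective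
    have heq : (A.filter fun x => ∃ y ∈ s.image (fun b : ↥B₁ => (b : α)), dist x y < ε)
        = s.biUnion fun b => A.filter fun x => dist x (b : α) < ε := by
      ext x
      simp only [Finset.mem_filter, Finset.mem_biUnion, Finset.mem_image]
      constructor
      · rintro ⟨hxA, y, ⟨b, hb, rfl⟩, hd⟩
        exact ⟨b, hb, hxA, hd⟩
      · rintro ⟨b, hb, hxA, hd⟩
        exact ⟨hxA, b, ⟨b, hb, rfl⟩, hd⟩
    have := hB _ hYsub
    rw [heq] at this
    omega
  obtain ⟨f₂, hf₂inj, hf₂mem⟩ :=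
    (Finset.all_card_le_biUnion_card_iff_exists_injective
      (fun b : ↥B₁ => A.filter fun x => dist x (b : α) < ε)).mp hallB
  -- package the injections as maps `α → α`
  set g : α → α := fun x => if hx : x ∈ A₁ then f₁ ⟨x, hx⟩ else x with hgdef
  set h : α → α := fun y => if hy : y ∈ B₁ then f₂ ⟨y, hy⟩ else y with hhdef
  have hg1 : ∀ a ∈ A₁, g a ∈ B := by
    intro a ha
    have := hf₁mem ⟨a, ha⟩
    simp only [Finset.mem_filter] at this
    simpa [hgdef, dif_pos ha] using this.1
  have hg2 : ∀ a ∈ A₁, dist a (g a) < ε := by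
    intro a ha
    have := hf₁mem ⟨a, ha⟩
    simp only [Finset.mem_filter] at this
    have := this.2
    rw [dist_comm] at this
    simpa [hgdef, dif_pos ha] using this
  have hg3 : ∀ a₁ ∈ A₁, ∀ a₂ ∈ A₁, g a₁ = g a₂ → a₁ = a₂ := by
    intro a₁ h₁ a₂ h₂ he
    simp only [hgdef, dif_pos h₁, dif_pos h₂] at he
    have := hf₁inj he
    exact congrArg Subtype.val this
  have hh1 : ∀ b ∈ B₁, h b ∈ A := by
    intro b hb
    have := hf₂mem ⟨b, hb⟩
    simp only [Finset.mem_filter] at this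
    simpa [hhdef, dif_pos hb] using this.1
  have hh2 : ∀ b ∈ B₁, dist (h b) b < ε := by
    intro b hb
    have := hf₂mem ⟨b, hb⟩
    simp only [Finset.mem_filter] at this
    simpa [hhdef, dif_pos hb] using this.2
  have hh3 : ∀ b₁ ∈ B₁, ∀ b₂ ∈ B₁, h b₁ = h b₂ → b₁ = b₂ := by
    intro b₁ h₁ b₂ h₂ he
    simp only [hhdef, dif_pos h₁, dif_pos h₂] at he
    have := hf₂inj he
    exact congrArg Subtype.val this
  -- basic facts about the chain set
  have hmemB : ∀ b, MarriageChain g h A₁ B₁ b → b ∈ B₁ := by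
    intro b hb
    induction hb with
    | base b h1 h2 => exact h1
    | step b hb h1 h2 ih => exact h2
  have hkey : ∀ b, MarriageChain g h A₁ B₁ b → ∀ a ∈ A₁, g a = b →
      ∃ b', MarriageChain g h A₁ B₁ b' ∧ h b' = a := by
    intro b hb
    induction hb with
    | base b h1 h2 => exact fun a ha hga => absurd hga (h2 a ha)
    | step b hb h1 h2 ih =>
      intro a ha hga
      exact ⟨b, hb, (hg3 a ha (h b) h1 hga).symm⟩
  -- the candidate sets
  set A₂ : Finset α := A₁ ∪ (B₁.filter fun b => MarriageChain g h A₁ B₁ b).image h with hA₂def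
  have hmemA₂ : ∀ a, a ∈ A₂ ↔ a ∈ A₁ ∨ ∃ b, MarriageChain g h A₁ B₁ b ∧ h b = a := by
    intro a
    simp only [hA₂def, Finset.mem_union, Finset.mem_image, Finset.mem_filter]
    constructor
    · rintro (ha | ⟨b, ⟨hb1, hb2⟩, hb3⟩)
      · exact Or.inl ha
      · exact Or.inr ⟨b, hb2, hb3⟩
    · rintro (ha | ⟨b, hb2, hb3⟩)
      · exact Or.inl ha
      · exact Or.inr ⟨b, ⟨hmemB b hb2, hb2⟩, hb3⟩
  -- the matching function
  obtain ⟨f, hfpos, hfneg⟩ : ∃ f : α → α,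
      (∀ a b, MarriageChain g h A₁ B₁ b → h b = a → f a = b) ∧
      (∀ a, ¬(∃ b, MarriageChain g h A₁ B₁ b ∧ h b = a) → f a = g a) := by
    refine ⟨fun a => if hc : ∃ b, MarriageChain g h A₁ B₁ b ∧ h b = a
      then hc.choose else g a, ?_, ?_⟩
    · intro a b hb hba
      have hc : ∃ b, MarriageChain g h A₁ B₁ b ∧ h b = a := ⟨b, hb, hba⟩
      simp only [dif_pos hc]
      exact hh3 _ (hmemB _ hc.choose_spec.1) _ (hmemB _ hb)
        (hc.choose_spec.2.trans hba.symm)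
    · intro a hc
      simp only [dif_neg hc]
  refine ⟨A₂, A₂.image f, ?_, ?_, ?_, ?_, f, ?_, ?_⟩
  · -- A₁ ⊆ A₂
    intro a ha
    exact (hmemA₂ a).mpr (Or.inl ha)
  · -- A₂ ⊆ A
    intro a ha
    rcases (hmemA₂ a).mp ha with ha | ⟨b, hb, rfl⟩
    · exact hA₁ ha
    · exact hh1 b (hmemB b hb)
  · -- B₁ ⊆ B₂
    intro b hb
    by_cases hc : MarriageChain g h A₁ B₁ b
    · have haA₂ : h b ∈ A₂ := (hmemA₂ _).mpr (Or.inr ⟨b, hc, rfl⟩)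
      have : f (h b) = b := hfpos (h b) b hc rfl
      exact Finset.mem_image.mpr ⟨h b, haA₂, this⟩
    · -- b is a g-image of some a ∈ A₁
      have : ¬(∀ a ∈ A₁, g a ≠ b) := fun hall => hc (MarriageChain.base b hb hall)
      push_neg at this
      obtain ⟨a, ha, hga⟩ := this
      have haD : ¬∃ b', MarriageChain g h A₁ B₁ b' ∧ h b' = a := by
        rintro ⟨b', hb', hb'a⟩
        have : h b' ∈ A₁ := hb'a ▸ ha
        have : MarriageChain g h A₁ B₁ (g (h b')) :=
          MarriageChain.step b' hb' this (by rw [hb'a, hga]; exact hb)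
        rw [hb'a, hga] at this
        exact hc this
      have hfa : f a = b := by rw [hfneg a haD, hga]
      exact Finset.mem_image.mpr ⟨a, (hmemA₂ a).mpr (Or.inl ha), hfa⟩
  · -- B₂ ⊆ B
    intro b hb
    obtain ⟨a, ha, rfl⟩ := Finset.mem_image.mp hb
    by_cases hc : ∃ b', MarriageChain g h A₁ B₁ b' ∧ h b' = a
    · obtain ⟨b', hb', hb'a⟩ := hc
      rw [hfpos a b' hb' hb'a]
      exact hB₁ (hmemB b' hb')
    · rcases (hmemA₂ a).mp ha with haA | hD
      · rw [hfneg a hc]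
        exact hg1 a haA
      · exact absurd hD hc
  · -- BijOn
    refine ⟨?_, ?_, ?_⟩
    · intro a ha
      exact Finset.mem_coe.mpr (Finset.mem_image_of_mem f (Finset.mem_coe.mp ha))
    · -- InjOn
      intro a₁ h₁ a₂ h₂ hfe
      have h₁' := (hmemA₂ a₁).mp (Finset.mem_coe.mp h₁)
      have h₂' := (hmemA₂ a₂).mp (Finset.mem_coe.mp h₂)
      by_cases hc₁ : ∃ b, MarriageChain g h A₁ B₁ b ∧ h b = a₁ <;>
        by_cases hc₂ : ∃ b, MarriageChain g h A₁ B₁ b ∧ h b = a₂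
      · obtain ⟨b₁, hb₁, hb₁a⟩ := hc₁
        obtain ⟨b₂, hb₂, hb₂a⟩ := hc₂
        rw [hfpos a₁ b₁ hb₁ hb₁a, hfpos a₂ b₂ hb₂ hb₂a] at hfe
        rw [← hb₁a, ← hb₂a, hfe]
      · -- a₁ in chain image, a₂ not: contradiction
        obtain ⟨b₁, hb₁, hb₁a⟩ := hc₁
        have ha₂A : a₂ ∈ A₁ := h₂'.resolve_right hc₂
        rw [hfpos a₁ b₁ hb₁ hb₁a, hfneg a₂ hc₂] at hfe
        exact absurd (hkey b₁ hb₁ a₂ ha₂A hfe.symm) hc₂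
      · obtain ⟨b₂, hb₂, hb₂a⟩ := hc₂
        have ha₁A : a₁ ∈ A₁ := h₁'.resolve_right hc₁
        rw [hfpos a₂ b₂ hb₂ hb₂a, hfneg a₁ hc₁] at hfe
        exact absurd (hkey b₂ hb₂ a₁ ha₁A hfe) hc₁
      · have ha₁A : a₁ ∈ A₁ := h₁'.resolve_right hc₁
        have ha₂A : a₂ ∈ A₁ := h₂'.resolve_right hc₂
        rw [hfneg a₁ hc₁, hfneg a₂ hc₂] at hfe
        exact hg3 a₁ ha₁A a₂ ha₂A hfe
    · -- SurjOn
      intro b hb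
      obtain ⟨a, ha, rfl⟩ := Finset.mem_coe.mp hb |> Finset.mem_image.mp
      exact ⟨a, Finset.mem_coe.mpr ha, rfl⟩
  · -- distances
    intro a ha
    by_cases hc : ∃ b, MarriageChain g h A₁ B₁ b ∧ h b = a
    · obtain ⟨b, hb, hba⟩ := hc
      rw [hfpos a b hb hba, ← hba]
      exact hh2 b (hmemB b hb)
    · have haA : a ∈ A₁ := ((hmemA₂ a).mp ha).resolve_right hc
      rw [hfneg a hc]
      exact hg2 a haA
end
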